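/- Let G = (V,E) be a connected finite simple undirected graph on n ≥ 3 vertices and let L ≥ 1 be an integer. Then G has a spanning tree with at least L leaves if and only if there exists a nonempty set S ⊆ V such that G[S] is connected and |N(S) \ S| ≥ L, where N(S) is the set of vertices of V having at least one neighbor in S. -/

import Mathlib

namespace CMCPaper

variable {V : Type*}

/-- Set of edges of `G` with exactly one endpoint in `S`. -/
def cutSet (G : SimpleGraph V) (S : Set V) : Set (Sym2 V) :=
  {e | e ∈ G.edgeSet ∧ ∃ u v, e = s(u, v) ∧ u ∈ S ∧ v ∉ S}

/-- Weight of the cut `δ(S)`. -/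
noncomputable def cutWeight (G : SimpleGraph V) (w : Sym2 V → ℕ) (S : Set V) : ℕ :=
  ∑ᶠ e ∈ cutSet G S, w e

/-- Total weight of all edges of `G` (the number of 1-edges, for 0/1 weights). -/
noncomputable def totalWeight (G : SimpleGraph V) (w : Sym2 V → ℕ) : ℕ :=
  ∑ᶠ e ∈ G.edgeSet, w e

/-- `W_G(v)`: total weight of edges of `G` incident to `v`. -/
noncomputable def vertexWeight (G : SimpleGraph V) (w : Sym2 V → ℕ) (v : V) : ℕ :=
  ∑ᶠ e ∈ {e ∈ G.edgeSet | v ∈ e}, w e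

/-- `G` contains no path on three (distinct) vertices all of degree 2. -/
def NoDeg2Path3 (G : SimpleGraph V) : Prop :=
  ¬ ∃ u v w : V, u ≠ w ∧ G.Adj u v ∧ G.Adj v w ∧
      (G.neighborSet u).ncard = 2 ∧ (G.neighborSet v).ncard = 2 ∧
      (G.neighborSet w).ncard = 2
open SimpleGraph

lemma exists_third [Fintype V] (hn : 3 ≤ Fintype.card V) (u v : V) :
    ∃ x : V, x ≠ u ∧ x ≠ v := by
  classical
  by_contra h
  push_neg at h
  have hsub : (Finset.univ : Finset V) ⊆ {u, v} := by
    intro x _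
    rcases Classical.em (x = u) with h1 | h1
    · simp [h1]
    · simp [h x h1]
  have := Finset.card_le_card hsub
  have h2 : ({u, v} : Finset V).card ≤ 2 := Finset.card_insert_le _ _ |>.trans (by simp)
  simp only [Finset.card_univ] at this
  omega

lemma not_both_leaves [Fintype V] {T : SimpleGraph V} (hc : T.Connected)
    (hn : 3 ≤ Fintype.card V) {u v : V} (h : T.Adj u v)
    (hu : (T.neighborSet u).ncard = 1) (hv : (T.neighborSet v).ncard = 1) : False := by
  classical
  obtain ⟨x, hxu, hxv⟩ := exists_third hn u v
  have hNu : T.neighborSet u = {v} := by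
    obtain ⟨a, ha⟩ := Set.ncard_eq_one.mp hu
    have hv' : v ∈ T.neighborSet u := h
    rw [ha] at hv'
    have : v = a := hv'
    rw [ha, this]
  have hNv : T.neighborSet v = {u} := by
    obtain ⟨a, ha⟩ := Set.ncard_eq_one.mp hv
    have hu' : u ∈ T.neighborSet v := h.symm
    rw [ha] at hu'
    have : u = a := hu'
    rw [ha, this]
  obtain ⟨wk⟩ := hc.preconnected u x
  obtain ⟨p, hp⟩ := wk.toPath
  cases p with
  | nil => exact hxu rfl
  | @cons _ b _ h1 q =>
    have hb : b = v := by
      have : b ∈ T.neighborSet u := h1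
      rw [hNu] at this; exact this
    subst hb
    cases q with
    | nil => exact hxv rfl
    | @cons _ c _ h2 r =>
      have hcu : c = u := by
        have h2' : c ∈ T.neighborSet b := h2
        rw [hNv] at h2'; exact h2'
      subst hcu
      have := ((SimpleGraph.Walk.cons_isPath_iff _ _).mp hp).2
      exact this (by simp [SimpleGraph.Walk.support_cons,
        SimpleGraph.Walk.start_mem_support])

lemma path_interior [Finite V] {T : SimpleGraph V} {a b : V} (p : T.Walk a b)
    (hp : p.IsPath) :
    ∀ v ∈ p.support, v = a ∨ v = b ∨ 2 ≤ (T.neighborSet v).ncard := by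
  induction p with
  | nil => intro v hv; left; simpa using hv
  | @cons x y z hadj q ih =>
    intro v hv
    rw [SimpleGraph.Walk.support_cons, List.mem_cons] at hv
    rcases hv with rfl | hv
    · exact Or.inl rfl
    · rcases ih hp.of_cons v hv with rfl | hb | hdeg
      · cases q with
        | nil => exact Or.inr (Or.inl rfl)
        | @cons _ w _ h2 r =>
          right; right
          have hxw : x ≠ w := by
            intro hxe
            have : x ∈ (SimpleGraph.Walk.cons h2 r).support := by
              rw [SimpleGraph.Walk.support_cons, hxe]
              exact List.mem_cons_of_mem _ r.start_mem_support
            exact ((SimpleGraph.Walk.cons_isPath_iff _ _).mp hp).2 this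
          have hsub : ({x, w} : Set V) ⊆ T.neighborSet v := by
            intro t ht
            rcases ht with rfl | ht
            · exact hadj.symm
            · simp only [Set.mem_singleton_iff] at ht; subst ht; exact h2
          calc (2 : ℕ) = ({x, w} : Set V).ncard := (Set.ncard_pair hxw).symm
          _ ≤ (T.neighborSet v).ncard := Set.ncard_le_ncard hsub (Set.toFinite _)
      · exact Or.inr (Or.inl hb)
      · exact Or.inr (Or.inr hdeg)

lemma reach_induce_of_walk {T G : SimpleGraph V} (hTG : T ≤ G) {S : Set V} {a b : V}
    (p : T.Walk a b) (hs : ∀ v ∈ p.support, v ∈ S) :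
    (G.induce S).Reachable ⟨a, hs a p.start_mem_support⟩ ⟨b, hs b p.end_mem_support⟩ := by
  induction p with
  | nil => rfl
  | @cons x y z hadj q ih =>
    have hx : x ∈ S := hs x (by simp)
    have hy : y ∈ S := hs y (by simp [SimpleGraph.Walk.support_cons])
    have hstep : (G.induce S).Adj ⟨x, hx⟩ ⟨y, hy⟩ := hTG hadj
    exact hstep.reachable.trans
      (ih (fun v hv => hs v (by simp [SimpleGraph.Walk.support_cons, hv])))

lemma induce_reach_mono (G : SimpleGraph V) {S S' : Set V} (hss : S ⊆ S') {a b : ↥S}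
    (p : (G.induce S).Walk a b) :
    (G.induce S').Reachable ⟨a, hss a.2⟩ ⟨b, hss b.2⟩ := by
  induction p with
  | nil => rfl
  | @cons x y z hadj q ih =>
    have hstep : (G.induce S').Adj ⟨x, hss x.2⟩ ⟨y, hss y.2⟩ := hadj
    exact hstep.reachable.trans ih

lemma reachable_delete {H : SimpleGraph V} {v w : V}
    (hr : (H \ SimpleGraph.fromEdgeSet {s(v, w)}).Reachable v w) {a b : V}
    (p : H.Walk a b) : (H \ SimpleGraph.fromEdgeSet {s(v, w)}).Reachable a b := by
  induction p with
  | nil => rfl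
  | @cons x y z hadj q ih =>
    by_cases he : s(x, y) = s(v, w)
    · rw [Sym2.eq_iff] at he
      rcases he with ⟨rfl, rfl⟩ | ⟨rfl, rfl⟩
      · exact hr.trans ih
      · exact hr.symm.trans ih
    · have hstep : (H \ SimpleGraph.fromEdgeSet {s(v, w)}).Adj x y := by
        rw [SimpleGraph.sdiff_adj]
        refine ⟨hadj, ?_⟩
        rw [SimpleGraph.fromEdgeSet_adj]
        rintro ⟨hm, -⟩
        exact he hm
      exact hstep.reachable.trans ih

lemma exists_spanning_tree [Fintype V] (G : SimpleGraph V) (hc : G.Connected) :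
    ∃ T : SimpleGraph V, T ≤ G ∧ T.IsTree := by
  classical
  have hP : ∃ n, ∃ H : SimpleGraph V, H ≤ G ∧ H.Connected ∧ H.edgeSet.ncard = n :=
    ⟨G.edgeSet.ncard, G, le_refl _, hc, rfl⟩
  obtain ⟨H, hHG, hHc, hHcard⟩ := Nat.find_spec hP
  refine ⟨H, hHG, hHc, ?_⟩
  rw [SimpleGraph.isAcyclic_iff_forall_adj_isBridge]
  intro v w hadj
  by_contra hnb
  rw [SimpleGraph.isBridge_iff] at hnb
  push_neg at hnb
  have hr := hnb
  set H' := H \ SimpleGraph.fromEdgeSet {s(v, w)} with hH'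
  have hH'le : H' ≤ H := sdiff_le
  haveI : Nonempty V := hHc.nonempty
  have hH'c : H'.Connected := by
    refine SimpleGraph.Connected.mk ?_
    intro a b
    obtain ⟨p⟩ := hHc.preconnected a b
    exact reachable_delete hr p
  have hssub : H'.edgeSet ⊂ H.edgeSet := by
    refine ⟨SimpleGraph.edgeSet_mono hH'le, fun hsub => ?_⟩
    have hmem : s(v, w) ∈ H'.edgeSet := hsub hadj
    rw [SimpleGraph.mem_edgeSet, SimpleGraph.sdiff_adj] at hmem
    exact hmem.2 (by rw [SimpleGraph.fromEdgeSet_adj]; exact ⟨rfl, hadj.ne⟩)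
  have hlt : H'.edgeSet.ncard < H.edgeSet.ncard := Set.ncard_lt_ncard hssub (Set.toFinite _)
  rw [hHcard] at hlt
  exact Nat.find_min hP hlt ⟨H', hH'le.trans hHG, hH'c, rfl⟩

lemma exists_neighbor [Fintype V] {T : SimpleGraph V} (hc : T.Connected)
    (hn : 3 ≤ Fintype.card V) (w : V) : ∃ y, T.Adj w y := by
  obtain ⟨x, hx, -⟩ := exists_third hn w w
  obtain ⟨p⟩ := hc.preconnected w x
  cases p with
  | nil => exact absurd rfl hx.symm
  | cons h q => exact ⟨_, h⟩


lemma induce_to_supergraph {G H : SimpleGraph V} {S : Set V}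
    (hadj : ∀ a b : V, a ∈ S → b ∈ S → G.Adj a b → H.Adj a b) {x y : ↥S}
    (p : (G.induce S).Walk x y) : H.Reachable ↑x ↑y := by
  induction p with
  | nil => rfl
  | @cons a b c h q ih =>
    exact (hadj ↑a ↑b a.2 b.2 h).reachable.trans ih

lemma grow [Fintype V] (G : SimpleGraph V) (hconn : G.Connected) (L : ℕ) :
    ∀ (k : ℕ) (S : Set V), Sᶜ.ncard ≤ k → S.Nonempty → (G.induce S).Connected →
    L ≤ ({v : V | ∃ u ∈ S, G.Adj u v} \ S).ncard →
    ∃ S' : Set V, S'.Nonempty ∧ (G.induce S').Connected ∧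
      L ≤ ({v : V | ∃ u ∈ S', G.Adj u v} \ S').ncard ∧
      ∀ v, v ∉ S' → ∃ u ∈ S', G.Adj u v := by
  intro k
  induction k with
  | zero =>
    intro S hk hne hc hL
    refine ⟨S, hne, hc, hL, fun v hv => ?_⟩
    exfalso
    have h0 : Sᶜ.ncard = 0 := Nat.le_zero.mp hk
    rw [Set.ncard_eq_zero (Set.toFinite _)] at h0
    have : v ∈ (Sᶜ : Set V) := hv
    rw [h0] at this
    exact this
  | succ k ih =>
    intro S hk hne hc hL
    by_cases hall : ∀ v, v ∉ S → ∃ u ∈ S, G.Adj u v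
    · exact ⟨S, hne, hc, hL, hall⟩
    · push_neg at hall
      obtain ⟨b, hbS, hbN⟩ := hall
      obtain ⟨a, haS⟩ := hne
      set A : Set V := S ∪ {v : V | ∃ u ∈ S, G.Adj u v} with hA
      have haA : a ∈ A := Or.inl haS
      have hbA : b ∉ A := by
        rintro (h | ⟨u, huS, hadj⟩)
        · exact hbS h
        · exact hbN u huS hadj
      obtain ⟨p⟩ := hconn.preconnected a b
      obtain ⟨⟨⟨x, z⟩, hadjxz⟩, -, hfst, hsnd⟩ := p.exists_boundary_dart A haA hbA
      have hfst : x ∈ A := hfst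
      have hsnd : z ∉ A := hsnd
      have hxS : x ∉ S := fun h => hsnd (Or.inr ⟨x, h, hadjxz⟩)
      have hxN : x ∈ {v : V | ∃ u ∈ S, G.Adj u v} := hfst.resolve_left hxS
      obtain ⟨u0, hu0S, hu0adj⟩ := hxN
      have hxS' : x ∈ insert x S := Set.mem_insert _ _
      -- connectivity of the enlarged set
      have hc' : (G.induce (insert x S)).Connected := by
        haveI : Nonempty ↥(insert x S : Set V) := ⟨⟨x, hxS'⟩⟩
        refine SimpleGraph.Connected.mk ?_
        have hreach : ∀ w : ↥(insert x S : Set V),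
            (G.induce (insert x S)).Reachable w ⟨u0, Set.mem_insert_of_mem _ hu0S⟩ := by
          rintro ⟨w, hw⟩
          by_cases hwS : w ∈ S
          · obtain ⟨q⟩ := hc.preconnected ⟨w, hwS⟩ ⟨u0, hu0S⟩
            exact induce_reach_mono G (Set.subset_insert _ _) q
          · have hwx : w = x := (Set.mem_insert_iff.mp hw).resolve_right hwS
            have hstep : (G.induce (insert x S)).Adj ⟨w, hw⟩
                ⟨u0, Set.mem_insert_of_mem _ hu0S⟩ := by
              show G.Adj w u0
              rw [hwx]; exact hu0adj.symm
            exact hstep.reachable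
        intro p q
        exact (hreach p).trans (hreach q).symm
      -- cardinality of the new boundary
      set N1 : Set V := {v : V | ∃ u ∈ S, G.Adj u v} \ S with hN1
      have hxN1 : x ∈ N1 := ⟨⟨u0, hu0S, hu0adj⟩, hxS⟩
      have hzN1 : z ∉ N1 \ {x} := fun h => hsnd (Or.inr h.1.1)
      have hsub : insert z (N1 \ {x}) ⊆
          {v : V | ∃ u ∈ insert x S, G.Adj u v} \ insert x S := by
        rintro t (rfl | ⟨⟨htN, htS⟩, htx⟩)
        · refine ⟨⟨x, Set.mem_insert _ _, hadjxz⟩, ?_⟩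
          rintro (rfl | hzS)
          · exact hsnd hfst
          · exact hsnd (Or.inl hzS)
        · obtain ⟨u, huS, huadj⟩ := htN
          refine ⟨⟨u, Set.mem_insert_of_mem _ huS, huadj⟩, ?_⟩
          rintro (rfl | htS')
          · exact htx rfl
          · exact htS htS'
      have hzi : z ∉ N1 \ {x} := hzN1
      have hcard : L ≤ ({v : V | ∃ u ∈ insert x S, G.Adj u v} \ insert x S).ncard := by
        have h1 : (N1 \ {x}).ncard + 1 = N1.ncard :=
          Set.ncard_diff_singleton_add_one hxN1 (Set.toFinite _)
        have h2 : (insert z (N1 \ {x})).ncard = (N1 \ {x}).ncard + 1 :=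
          Set.ncard_insert_of_notMem hzi (Set.toFinite _)
        have h3 := Set.ncard_le_ncard hsub (Set.toFinite _)
        omega
      -- complement got smaller
      have hkk : (insert x S)ᶜ.ncard ≤ k := by
        have hxc : x ∈ Sᶜ := hxS
        have h1 : (Sᶜ \ {x}).ncard + 1 = Sᶜ.ncard :=
          Set.ncard_diff_singleton_add_one hxc (Set.toFinite _)
        have h2 : (insert x S)ᶜ = Sᶜ \ {x} := by
          ext t
          simp only [Set.mem_compl_iff, Set.mem_insert_iff, Set.mem_diff,
            Set.mem_singleton_iff]
          tauto
        rw [h2]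
        omega
      exact ih (insert x S) hkk ⟨x, hxS'⟩ hc' hcard


/-- A connected graph on `n ≥ 3` vertices has a spanning tree with at
least `L ≥ 1` leaves iff there is a nonempty `S` with `G[S]` connected and
`|N(S) \ S| ≥ L`. -/
theorem max_leaf_iff_connected_neighborhood {V : Type*} [Fintype V]
    (G : SimpleGraph V) (hconn : G.Connected)
    (hn : 3 ≤ Fintype.card V)
    (L : ℕ) (hL : 1 ≤ L) :
    (∃ T : SimpleGraph V, T ≤ G ∧ T.IsTree ∧
        L ≤ ({v : V | (T.neighborSet v).ncard = 1}).ncard) ↔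
    (∃ S : Set V, S.Nonempty ∧ (G.induce S).Connected ∧
        L ≤ (({v : V | ∃ u ∈ S, G.Adj u v}) \ S).ncard) := by
  classical
  constructor
  · rintro ⟨T, hTG, hT, hleaf⟩
    have hTc : T.Connected := hT.1
    set S : Set V := {v : V | (T.neighborSet v).ncard ≠ 1} with hS
    have hSne : S.Nonempty := by
      by_contra hempty
      rw [Set.not_nonempty_iff_eq_empty] at hempty
      haveI : Nonempty V := Fintype.card_pos_iff.mp (by omega)
      obtain ⟨v⟩ := ‹Nonempty V›
      obtain ⟨y, hy⟩ := exists_neighbor hTc hn v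
      have hv1 : (T.neighborSet v).ncard = 1 := by
        by_contra h1
        have : v ∈ S := h1
        rw [hempty] at this; exact this
      have hy1 : (T.neighborSet y).ncard = 1 := by
        by_contra h1
        have : y ∈ S := h1
        rw [hempty] at this; exact this
      exact not_both_leaves hTc hn hy hv1 hy1
    refine ⟨S, hSne, ?_, ?_⟩
    · haveI : Nonempty ↥S := hSne.to_subtype
      refine SimpleGraph.Connected.mk ?_
      rintro ⟨p, hpS⟩ ⟨q, hqS⟩
      obtain ⟨wk⟩ := hTc.preconnected p q
      obtain ⟨pa, hpa⟩ := wk.toPath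
      have hsupp : ∀ v ∈ pa.support, v ∈ S := by
        intro v hv
        rcases path_interior pa hpa v hv with rfl | rfl | hdeg
        · exact hpS
        · exact hqS
        · show (T.neighborSet v).ncard ≠ 1
          omega
      exact reach_induce_of_walk hTG pa hsupp
    · have hsub : {v : V | (T.neighborSet v).ncard = 1} ⊆
          {v : V | ∃ u ∈ S, G.Adj u v} \ S := by
        intro v hv
        have hv1 : (T.neighborSet v).ncard = 1 := hv
        obtain ⟨a, ha⟩ := Set.ncard_eq_one.mp hv1
        have hadj : T.Adj v a := by
          have : a ∈ T.neighborSet v := by rw [ha]; rfl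
          exact this
        have haS : a ∈ S := by
          show (T.neighborSet a).ncard ≠ 1
          intro ha1
          exact not_both_leaves hTc hn hadj hv1 ha1
        refine ⟨⟨a, haS, hTG hadj.symm⟩, ?_⟩
        show ¬(T.neighborSet v).ncard ≠ 1
        exact not_not.mpr hv1
      exact hleaf.trans (Set.ncard_le_ncard hsub (Set.toFinite _))
  · rintro ⟨S0, hne0, hc0, hL0⟩
    obtain ⟨S', hne', hc', hL', hall⟩ :=
      grow G hconn L (S0ᶜ.ncard) S0 le_rfl hne0 hc0 hL0
    -- choose, for each vertex outside S', a neighbor inside S'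
    have hf : ∀ v, v ∉ S' → ∃ u, u ∈ S' ∧ G.Adj u v := fun v hv => hall v hv
    let f : V → V := fun v => if h : v ∉ S' then (hf v h).choose else v
    have hfS : ∀ v, v ∉ S' → f v ∈ S' ∧ G.Adj (f v) v := by
      intro v hv
      simp only [f, dif_pos hv]
      exact (hf v hv).choose_spec
    -- the pendant graph
    let H : SimpleGraph V :=
      { Adj := fun a b => (a ∈ S' ∧ b ∈ S' ∧ G.Adj a b) ∨
          (a ∉ S' ∧ b = f a) ∨ (b ∉ S' ∧ a = f b)
        symm := by
          constructor
          rintro a b (⟨h1, h2, h3⟩ | h | h)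
          · exact Or.inl ⟨h2, h1, h3.symm⟩
          · exact Or.inr (Or.inr h)
          · exact Or.inr (Or.inl h)
        loopless := by
          constructor
          rintro a (⟨-, -, h⟩ | ⟨ha, he⟩ | ⟨ha, he⟩)
          · exact G.irrefl h
          · exact ha (he ▸ (hfS a ha).1)
          · exact ha (he ▸ (hfS a ha).1) }
    have hHG : H ≤ G := by
      rintro a b (⟨-, -, h⟩ | ⟨ha, he⟩ | ⟨hb, he⟩)
      · exact h
      · exact he ▸ ((hfS a ha).2).symm
      · exact he ▸ (hfS b hb).2
    haveI : Nonempty V := Fintype.card_pos_iff.mp (by omega)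
    obtain ⟨s0, hs0⟩ := hne'
    have key : ∀ v : V, H.Reachable v s0 := by
      intro v
      have hS'reach : ∀ w, w ∈ S' → H.Reachable w s0 := by
        intro w hw
        obtain ⟨q⟩ := hc'.preconnected ⟨w, hw⟩ ⟨s0, hs0⟩
        exact induce_to_supergraph
          (fun a b haS hbS hab => Or.inl ⟨haS, hbS, hab⟩) q
      by_cases hv : v ∈ S'
      · exact hS'reach v hv
      · have hstep : H.Adj v (f v) := Or.inr (Or.inl ⟨hv, rfl⟩)
        exact hstep.reachable.trans (hS'reach (f v) (hfS v hv).1)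
    have hHc : H.Connected :=
      SimpleGraph.Connected.mk (fun a b => (key a).trans (key b).symm)
    obtain ⟨T, hTH, hT⟩ := exists_spanning_tree H hHc
    refine ⟨T, hTH.trans hHG, hT, ?_⟩
    have hleaves : ∀ w, w ∉ S' → (T.neighborSet w).ncard = 1 := by
      intro w hw
      have hsub : T.neighborSet w ⊆ {f w} := by
        intro y hy
        have hHy : H.Adj w y := hTH hy
        rcases hHy with ⟨hwS, -, -⟩ | ⟨-, he⟩ | ⟨hyS, he⟩
        · exact absurd hwS hw
        · exact he
        · exact absurd (he ▸ (hfS y hyS).1) hw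
      obtain ⟨y, hy⟩ := exists_neighbor hT.1 hn w
      have hyf : y = f w := hsub hy
      have : T.neighborSet w = {f w} := by
        refine Set.Subset.antisymm hsub ?_
        intro t ht
        rw [Set.mem_singleton_iff] at ht
        subst ht
        exact hyf ▸ hy
      rw [this, Set.ncard_singleton]
    have hsub2 : {v : V | ∃ u ∈ S', G.Adj u v} \ S' ⊆
        {v : V | (T.neighborSet v).ncard = 1} := by
      rintro v ⟨-, hvS⟩
      exact hleaves v hvS
    exact hL'.trans (Set.ncard_le_ncard hsub2 (Set.toFinite _))

end CMCPaper
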